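/- Black-Scholes gamma formula and bound: for all S, K, θ, σ > 0, the second derivatives of c_BS and of p_BS with respect to S both equal φ(d₁)/(S·σ·√θ), and in particular each is bounded above by 1/(S·√(2π·σ²·θ)). -/

import Mathlib

open MeasureTheory Real Filter Topology

/-- The standard normal density. -/
noncomputable def stdNormalPDF (x : ℝ) : ℝ :=
  (Real.sqrt (2 * Real.pi))⁻¹ * Real.exp (-(x ^ 2) / 2)

/-- The standard normal cumulative distribution function. -/
noncomputable def stdNormalCDF (x : ℝ) : ℝ :=
  ∫ t in Set.Iic x, stdNormalPDF t

/-- `d₁ = log(S/K)/(σ√θ) + σ√θ/2`. -/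
noncomputable def d1 (S K θ σ : ℝ) : ℝ :=
  Real.log (S / K) / (σ * Real.sqrt θ) + σ * Real.sqrt θ / 2

/-- `d₂ = d₁ − σ√θ`. -/
noncomputable def d2 (S K θ σ : ℝ) : ℝ :=
  d1 S K θ σ - σ * Real.sqrt θ

/-- Black-Scholes call price `c_BS(S,K,θ,σ) = S·Φ(d₁) − K·Φ(d₂)`. -/
noncomputable def cBS (S K θ σ : ℝ) : ℝ :=
  S * stdNormalCDF (d1 S K θ σ) - K * stdNormalCDF (d2 S K θ σ)

/-- Black-Scholes put price `p_BS(S,K,θ,σ) = K·Φ(−d₂) − S·Φ(−d₁)`. -/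
noncomputable def pBS (S K θ σ : ℝ) : ℝ :=
  K * stdNormalCDF (-(d2 S K θ σ)) - S * stdNormalCDF (-(d1 S K θ σ))

lemma integrable_stdNormalPDF : Integrable stdNormalPDF := by
  have h := (integrable_exp_neg_mul_sq (by norm_num : (0:ℝ) < 1/2)).const_mul
    (Real.sqrt (2 * Real.pi))⁻¹
  convert h using 2 with x
  simp only [stdNormalPDF]
  ring_nf

lemma continuous_stdNormalPDF : Continuous stdNormalPDF := by
  unfold stdNormalPDF; fun_prop

lemma stdNormalPDF_neg (x : ℝ) : stdNormalPDF (-x) = stdNormalPDF x := by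
  simp [stdNormalPDF, neg_sq]

lemma hasDerivAt_stdNormalCDF (x : ℝ) :
    HasDerivAt stdNormalCDF (stdNormalPDF x) x := by
  have hfun : stdNormalCDF = fun u =>
      (∫ t in Set.Iic (0:ℝ), stdNormalPDF t) + ∫ t in (0:ℝ)..u, stdNormalPDF t := by
    funext u
    have := intervalIntegral.integral_Iic_sub_Iic
      (integrable_stdNormalPDF.integrableOn (s := Set.Iic 0))
      (integrable_stdNormalPDF.integrableOn (s := Set.Iic u))
    simp only [stdNormalCDF]
    linarith
  rw [hfun]
  exact (intervalIntegral.integral_hasDerivAt_right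
    integrable_stdNormalPDF.intervalIntegrable
    (continuous_stdNormalPDF.stronglyMeasurableAtFilter _ _)
    continuous_stdNormalPDF.continuousAt).const_add _

lemma hasDerivAt_d1 (K θ σ : ℝ) (hK : 0 < K) (hθ : 0 < θ) (hσ : 0 < σ)
    {s : ℝ} (hs : 0 < s) :
    HasDerivAt (fun s' => d1 s' K θ σ) ((s * (σ * Real.sqrt θ))⁻¹) s := by
  have ha : 0 < σ * Real.sqrt θ := mul_pos hσ (Real.sqrt_pos.mpr hθ)
  have h0 : HasDerivAt (fun s' : ℝ => s' / K) (1 / K) s := (hasDerivAt_id s).div_const K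
  have h1 : HasDerivAt (fun s' : ℝ => Real.log (s' / K)) ((1 / K) / (s / K)) s :=
    h0.log (by positivity)
  have h2 := (h1.div_const (σ * Real.sqrt θ)).add_const (σ * Real.sqrt θ / 2)
  refine h2.congr_deriv ?_
  field_simp

lemma key_identity (S K θ σ : ℝ) (hS : 0 < S) (hK : 0 < K) (hθ : 0 < θ) (hσ : 0 < σ) :
    S * stdNormalPDF (d1 S K θ σ) = K * stdNormalPDF (d2 S K θ σ) := by
  have ha : σ * Real.sqrt θ ≠ 0 := by positivity
  have hsq : d1 S K θ σ ^ 2 - d2 S K θ σ ^ 2 = 2 * Real.log (S / K) := by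
    simp only [d2, d1]; field_simp; ring
  have h2 : Real.exp (-(d2 S K θ σ ^ 2) / 2)
      = Real.exp (-(d1 S K θ σ ^ 2) / 2) * (S / K) := by
    rw [← Real.exp_log (show (0:ℝ) < S / K by positivity), ← Real.exp_add]
    congr 1
    linarith
  simp only [stdNormalPDF]
  rw [h2]
  field_simp

lemma hasDerivAt_cBS (K θ σ : ℝ) (hK : 0 < K) (hθ : 0 < θ) (hσ : 0 < σ)
    {s : ℝ} (hs : 0 < s) :
    HasDerivAt (fun s' => cBS s' K θ σ) (stdNormalCDF (d1 s K θ σ)) s := by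
  have hd1 := hasDerivAt_d1 K θ σ hK hθ hσ hs
  have hd2 : HasDerivAt (fun s' => d2 s' K θ σ) ((s * (σ * Real.sqrt θ))⁻¹) s := by
    have := hd1.sub_const (σ * Real.sqrt θ)
    simpa [d2] using this
  have hΦ1 : HasDerivAt (fun s' => stdNormalCDF (d1 s' K θ σ))
      (stdNormalPDF (d1 s K θ σ) * (s * (σ * Real.sqrt θ))⁻¹) s :=
    (hasDerivAt_stdNormalCDF _).comp s hd1
  have hΦ2 : HasDerivAt (fun s' => stdNormalCDF (d2 s' K θ σ))
      (stdNormalPDF (d2 s K θ σ) * (s * (σ * Real.sqrt θ))⁻¹) s :=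
    (hasDerivAt_stdNormalCDF _).comp s hd2
  have h := ((hasDerivAt_id s).mul hΦ1).sub (hΦ2.const_mul K)
  have hkey := key_identity s K θ σ hs hK hθ hσ
  refine h.congr_deriv ?_
  simp only [id]
  have h0 : s * (stdNormalPDF (d1 s K θ σ) * (s * (σ * Real.sqrt θ))⁻¹)
      = K * (stdNormalPDF (d2 s K θ σ) * (s * (σ * Real.sqrt θ))⁻¹) := by
    rw [← mul_assoc, ← mul_assoc, hkey]; ring
  linarith

lemma hasDerivAt_pBS (K θ σ : ℝ) (hK : 0 < K) (hθ : 0 < θ) (hσ : 0 < σ)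
    {s : ℝ} (hs : 0 < s) :
    HasDerivAt (fun s' => pBS s' K θ σ) (-stdNormalCDF (-(d1 s K θ σ))) s := by
  have hd1 := hasDerivAt_d1 K θ σ hK hθ hσ hs
  have hd2 : HasDerivAt (fun s' => d2 s' K θ σ) ((s * (σ * Real.sqrt θ))⁻¹) s := by
    simpa [d2] using hd1.sub_const (σ * Real.sqrt θ)
  have hΦ1 : HasDerivAt (fun s' => stdNormalCDF (-(d1 s' K θ σ)))
      (stdNormalPDF (-(d1 s K θ σ)) * -(s * (σ * Real.sqrt θ))⁻¹) s :=
    (hasDerivAt_stdNormalCDF _).comp s hd1.neg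
  have hΦ2 : HasDerivAt (fun s' => stdNormalCDF (-(d2 s' K θ σ)))
      (stdNormalPDF (-(d2 s K θ σ)) * -(s * (σ * Real.sqrt θ))⁻¹) s :=
    (hasDerivAt_stdNormalCDF _).comp s hd2.neg
  have h := (hΦ2.const_mul K).sub ((hasDerivAt_id s).mul hΦ1)
  have hkey := key_identity s K θ σ hs hK hθ hσ
  refine h.congr_deriv ?_
  simp only [id, stdNormalPDF_neg]
  have h0 : s * (stdNormalPDF (d1 s K θ σ) * (s * (σ * Real.sqrt θ))⁻¹)
      = K * (stdNormalPDF (d2 s K θ σ) * (s * (σ * Real.sqrt θ))⁻¹) := by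
    rw [← mul_assoc, ← mul_assoc, hkey]; ring
  have hc : stdNormalPDF (d1 s K θ σ) * -(s * (σ * Real.sqrt θ))⁻¹
      = -(stdNormalPDF (d1 s K θ σ) * (s * (σ * Real.sqrt θ))⁻¹) := by ring
  have hc2 : stdNormalPDF (d2 s K θ σ) * -(s * (σ * Real.sqrt θ))⁻¹
      = -(stdNormalPDF (d2 s K θ σ) * (s * (σ * Real.sqrt θ))⁻¹) := by ring
  rw [hc, hc2]
  nlinarith [h0]

/-- Black-Scholes gamma formula and bound: for all `S, K, θ, σ > 0`, the second
derivatives of `c_BS` and `p_BS` with respect to `S` both equal `φ(d₁)/(S·σ·√θ)`, and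
each is bounded above by `1/(S·√(2π·σ²·θ))`. -/
theorem blackScholes_gamma
    (S K θ σ : ℝ) (hS : 0 < S) (hK : 0 < K) (hθ : 0 < θ) (hσ : 0 < σ) :
    deriv (fun s => deriv (fun s' => cBS s' K θ σ) s) S
        = stdNormalPDF (d1 S K θ σ) / (S * σ * Real.sqrt θ)
      ∧ deriv (fun s => deriv (fun s' => pBS s' K θ σ) s) S
        = stdNormalPDF (d1 S K θ σ) / (S * σ * Real.sqrt θ)
      ∧ stdNormalPDF (d1 S K θ σ) / (S * σ * Real.sqrt θ)
        ≤ 1 / (S * Real.sqrt (2 * Real.pi * σ ^ 2 * θ)) := by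
  have hpos : ∀ᶠ s in 𝓝 S, (0:ℝ) < s :=
    eventually_gt_nhds hS
  have hd1 := hasDerivAt_d1 K θ σ hK hθ hσ hS
  have hΓ : HasDerivAt (fun s => stdNormalCDF (d1 s K θ σ))
      (stdNormalPDF (d1 S K θ σ) * (S * (σ * Real.sqrt θ))⁻¹) S :=
    (hasDerivAt_stdNormalCDF _).comp S hd1
  have hform : stdNormalPDF (d1 S K θ σ) * (S * (σ * Real.sqrt θ))⁻¹
      = stdNormalPDF (d1 S K θ σ) / (S * σ * Real.sqrt θ) := by
    rw [div_eq_mul_inv, mul_assoc]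
  refine ⟨?_, ?_, ?_⟩
  · have heq : (fun s => deriv (fun s' => cBS s' K θ σ) s)
        =ᶠ[𝓝 S] fun s => stdNormalCDF (d1 s K θ σ) := by
      filter_upwards [hpos] with s hs
      exact (hasDerivAt_cBS K θ σ hK hθ hσ hs).deriv
    rw [heq.deriv_eq, hΓ.deriv, hform]
  · have heq : (fun s => deriv (fun s' => pBS s' K θ σ) s)
        =ᶠ[𝓝 S] fun s => -stdNormalCDF (-(d1 s K θ σ)) := by
      filter_upwards [hpos] with s hs
      exact (hasDerivAt_pBS K θ σ hK hθ hσ hs).deriv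
    have hΓp : HasDerivAt (fun s => -stdNormalCDF (-(d1 s K θ σ)))
        (stdNormalPDF (d1 S K θ σ) * (S * (σ * Real.sqrt θ))⁻¹) S := by
      have := (((hasDerivAt_stdNormalCDF (-(d1 S K θ σ))).comp S hd1.neg)).neg
      refine this.congr_deriv ?_
      rw [stdNormalPDF_neg]
      ring
    rw [heq.deriv_eq, hΓp.deriv, hform]
  · have hsqrt : Real.sqrt (2 * Real.pi * σ ^ 2 * θ)
        = Real.sqrt (2 * Real.pi) * (σ * Real.sqrt θ) := by
      rw [show 2 * Real.pi * σ ^ 2 * θ = (2 * Real.pi) * (σ * Real.sqrt θ) ^ 2 by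
          rw [mul_pow, Real.sq_sqrt hθ.le]; ring,
        Real.sqrt_mul (by positivity), Real.sqrt_sq (by positivity)]
    rw [hsqrt]
    have hpdf : stdNormalPDF (d1 S K θ σ) ≤ (Real.sqrt (2 * Real.pi))⁻¹ := by
      simp only [stdNormalPDF]
      have : Real.exp (-(d1 S K θ σ ^ 2) / 2) ≤ 1 := by
        rw [Real.exp_le_one_iff]
        nlinarith [sq_nonneg (d1 S K θ σ)]
      nlinarith [Real.sqrt_nonneg (2 * Real.pi), inv_nonneg.mpr (Real.sqrt_nonneg (2 * Real.pi))]
    have hden : (0:ℝ) < S * σ * Real.sqrt θ := by positivity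
    rw [div_le_div_iff₀ hden (by positivity)]
    have h2π : (0:ℝ) < Real.sqrt (2 * Real.pi) := by positivity
    calc stdNormalPDF (d1 S K θ σ) * (S * (Real.sqrt (2 * Real.pi) * (σ * Real.sqrt θ)))
        ≤ (Real.sqrt (2 * Real.pi))⁻¹ * (S * (Real.sqrt (2 * Real.pi) * (σ * Real.sqrt θ))) := by
          apply mul_le_mul_of_nonneg_right hpdf (by positivity)
      _ = 1 * (S * σ * Real.sqrt θ) := by field_simp
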